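/- U²-inverse theorem for localized norms: Let L > 0, δ, δ' ∈ (0,1], and let f : ℤ → ℂ be 1-bounded and supported on [L]. If ‖f‖_{U²_{[δ'L]}([L])} ≥ δ, then there exists β ∈ 𝕋 such that |𝔼_{x∈[L]} f(x) e(βx)| ≫ (δδ')^{O(1)}. -/

import Mathlib

open scoped BigOperators
open Finset Complex

/-- `C^n z`: apply complex conjugation `n` times. -/
noncomputable def conjPow (n : ℕ) (z : ℂ) : ℂ := if Even n then z else (starRingEnd ℂ) z

/-- The `2^d`-th power of the normalized Gowers box norm
`‖f‖_{□^d_{Q₁,…,Q_d}(S)}` of a function `f : ℤ → ℂ` supported on `S`. -/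
noncomputable def boxNormPow (d : ℕ) (Q : Fin d → Finset ℤ) (S : Finset ℤ) (f : ℤ → ℂ) : ℝ :=
  (S.card : ℝ)⁻¹ * ((∏ i, ((Q i).card : ℝ))⁻¹ ^ 2) *
    ∑' x : ℤ,
      (∑ h ∈ Fintype.piFinset Q, ∑ h' ∈ Fintype.piFinset Q,
        ∏ ω : Fin d → Bool,
          conjPow (∑ i, if ω i then 1 else 0)
            (f (x + ∑ i, if ω i then h i else h' i))).re

/-- The normalized Gowers box norm `‖f‖_{□^d_{Q₁,…,Q_d}(S)}`. -/
noncomputable def boxNorm (d : ℕ) (Q : Fin d → Finset ℤ) (S : Finset ℤ) (f : ℤ → ℂ) : ℝ :=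
  boxNormPow d Q S f ^ (((2 : ℝ) ^ d)⁻¹)

set_option maxHeartbeats 2000000

/-- Inverse theorem for the localized `U²`-norm `U²_{[δ'L]}([L])`: a `1`-bounded function
supported on `[L]` with large localized `U²`-norm correlates with a character `e(βx)`. -/

noncomputable def ec (K : ℕ) (m : ℤ) : ℂ := Complex.exp (2 * Real.pi * Complex.I * m / K)
lemma ec_eq (K : ℕ) (m : ℤ) : ec K m = Complex.exp (((2 * Real.pi * m / K : ℝ) : ℂ) * Complex.I) := by
  rw [ec]; congr 1; push_cast; ring
lemma ec_pow (K : ℕ) (m : ℤ) (n : ℕ) : ec K m ^ n = ec K (n * m) := by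
  rw [ec, ec, ← Complex.exp_nat_mul]; congr 1; push_cast; ring

lemma ec_add (K : ℕ) (a b : ℤ) : ec K (a + b) = ec K a * ec K b := by
  rw [ec, ec, ec, ← Complex.exp_add]; congr 1; push_cast; ring

lemma ec_zero (K : ℕ) : ec K 0 = 1 := by simp [ec]

lemma ec_conj (K : ℕ) (m : ℤ) : (starRingEnd ℂ) (ec K m) = ec K (-m) := by
  rw [ec_eq, ec_eq, ← Complex.exp_conj, map_mul, Complex.conj_ofReal, Complex.conj_I]
  congr 1; push_cast; ring

lemma ec_norm (K : ℕ) (m : ℤ) : ‖ec K m‖ = 1 := by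
  rw [ec_eq, Complex.norm_exp_ofReal_mul_I]

lemma ec_ne_one (K : ℕ) (d : ℤ) (hd : d ≠ 0) (hlt : |d| < K) : ec K d ≠ 1 := by
  have hK : (0:ℤ) < K := lt_of_le_of_lt (abs_nonneg d) hlt
  have hKr : (0:ℝ) < K := by exact_mod_cast hK
  rw [ec_eq]
  intro h
  rw [Complex.exp_eq_one_iff] at h
  obtain ⟨n, hn⟩ := h
  have him : (2 * Real.pi * d / K : ℝ) = n * (2 * Real.pi) := by
    have := congrArg Complex.im hn
    simpa using this
  have h2 : (2 * Real.pi) * (d:ℝ) = (2 * Real.pi) * ((n:ℝ) * K) := by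
    have := congrArg (· * (K:ℝ)) him
    field_simp at this
    rw [this]; ring
  have hd' : (d:ℝ) = (n:ℝ) * K := mul_left_cancel₀ (by positivity) h2
  have hd2 : d = n * K := by exact_mod_cast hd'
  rcases eq_or_ne n 0 with rfl | hn0
  · simp at hd2; exact hd hd2
  · have h1 : (1:ℤ) ≤ |n| := Int.one_le_abs hn0
    have : (K:ℤ) ≤ |d| := by
      rw [hd2, abs_mul, abs_of_nonneg hK.le]
      nlinarith
    linarith

lemma ec_geom (K : ℕ) (d : ℤ) (hlt : |d| < K) :
    ∑ j ∈ Finset.range K, ec K ((j : ℤ) * d) = if d = 0 then (K : ℂ) else 0 := by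
  have hK : (0:ℤ) < K := lt_of_le_of_lt (abs_nonneg d) hlt
  have hsum : ∑ j ∈ Finset.range K, ec K ((j : ℤ) * d) = ∑ j ∈ Finset.range K, ec K d ^ j := by
    refine Finset.sum_congr rfl fun j _ => ?_
    rw [ec_pow]
  rw [hsum]
  split_ifs with h
  · subst h; simp [ec, Complex.exp_zero]
  · rw [geom_sum_eq (ec_ne_one K d h hlt)]
    have : ec K d ^ K = 1 := by
      rw [ec_pow, ec]
      push_cast
      have hK0 : (K:ℂ) ≠ 0 := by exact_mod_cast (Nat.pos_of_ne_zero (by omega)).ne'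
      have : 2 * (Real.pi:ℂ) * Complex.I * ((K:ℕ) * (d:ℂ)) / K = d * (2 * Real.pi * Complex.I) := by
        field_simp
      rw [this, Complex.exp_int_mul_two_pi_mul_I]
    rw [this]
    simp

lemma parsevalZ (K : ℕ) (W : Finset ℤ) (hW : ∀ x ∈ W, ∀ y ∈ W, |x - y| < (K:ℤ)) (φ : ℤ → ℂ) :
    ∑ j ∈ Finset.range K, ‖∑ x ∈ W, φ x * ec K ((j:ℤ) * x)‖^2 = K * ∑ x ∈ W, ‖φ x‖^2 := by
  set S : ℕ → ℂ := fun j => ∑ x ∈ W, φ x * ec K ((j:ℤ) * x) with hS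
  have key : ∑ j ∈ Finset.range K, S j * (starRingEnd ℂ) (S j)
      = (K:ℂ) * ∑ x ∈ W, φ x * (starRingEnd ℂ) (φ x) := by
    have step1 : ∀ j ∈ Finset.range K, S j * (starRingEnd ℂ) (S j)
        = ∑ x ∈ W, ∑ y ∈ W, φ x * (starRingEnd ℂ) (φ y) * ec K ((j:ℤ) * (x - y)) := by
      intro j _
      rw [hS]
      simp only [map_sum, Finset.sum_mul_sum]
      refine Finset.sum_congr rfl fun x _ => Finset.sum_congr rfl fun y _ => ?_
      rw [map_mul, ec_conj]
      have h1 : ((j:ℤ)*x) + (-((j:ℤ)*y)) = (j:ℤ)*(x-y) := by ring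
      calc φ x * ec K ((j:ℤ)*x) * ((starRingEnd ℂ) (φ y) * ec K (-((j:ℤ)*y)))
          = φ x * (starRingEnd ℂ) (φ y) * (ec K ((j:ℤ)*x) * ec K (-((j:ℤ)*y))) := by ring
        _ = φ x * (starRingEnd ℂ) (φ y) * ec K ((j:ℤ)*(x-y)) := by rw [← ec_add, h1]
    rw [Finset.sum_congr rfl step1, Finset.sum_comm]
    have step2 : ∀ x ∈ W, ∑ j ∈ Finset.range K, ∑ y ∈ W, φ x * (starRingEnd ℂ) (φ y) * ec K ((j:ℤ) * (x - y))
        = (K:ℂ) * (φ x * (starRingEnd ℂ) (φ x)) := by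
      intro x hx
      rw [Finset.sum_comm]
      have step3 : ∀ y ∈ W, ∑ j ∈ Finset.range K, φ x * (starRingEnd ℂ) (φ y) * ec K ((j:ℤ) * (x - y))
          = if y = x then (K:ℂ) * (φ x * (starRingEnd ℂ) (φ x)) else 0 := by
        intro y hy
        rw [← Finset.mul_sum, ec_geom K (x - y) (hW x hx y hy)]
        split_ifs with h1 h2 h3
        · subst h2; ring
        · omega
        · omega
        · ring
      rw [Finset.sum_congr rfl step3, Finset.sum_ite_eq' W x (fun _ => (K:ℂ) * (φ x * (starRingEnd ℂ) (φ x)))]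
      simp [hx]
    rw [Finset.sum_congr rfl step2, ← Finset.mul_sum]
  have := congrArg Complex.re key
  simpa [Complex.mul_conj, Complex.normSq_eq_norm_sq,
    ← Complex.ofReal_pow] using this

lemma sum_piFinset_two (Q : Finset ℤ) (g : (Fin 2 → ℤ) → ℂ) :
    ∑ h ∈ Fintype.piFinset (fun _ : Fin 2 => Q), g h = ∑ a ∈ Q, ∑ b ∈ Q, g ![a, b] := by
  rw [← Finset.sum_product']
  refine Finset.sum_nbij' (fun h => (h 0, h 1)) (fun p => ![p.1, p.2]) ?_ ?_ ?_ ?_ ?_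
  · intro h hh
    simp only [Fintype.mem_piFinset] at hh
    simp [Finset.mem_product, hh 0, hh 1]
  · intro p hp
    simp only [Finset.mem_product] at hp
    simp [Fintype.mem_piFinset, Fin.forall_fin_two, hp.1, hp.2]
  · intro h _
    funext i
    fin_cases i <;> simp
  · intro p _
    simp
  · intro h _
    congr 1
    funext i
    fin_cases i <;> simp

lemma prod_eval (f : ℤ → ℂ) (x : ℤ) (h h' : Fin 2 → ℤ) :
    (∏ ω : Fin 2 → Bool,
      conjPow (∑ i, if ω i then 1 else 0) (f (x + ∑ i, if ω i then h i else h' i)))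
    = (f (x + h 0 + h 1) * (starRingEnd ℂ) (f (x + h 0 + h' 1))) *
      (starRingEnd ℂ) (f (x + h' 0 + h 1) * (starRingEnd ℂ) (f (x + h' 0 + h' 1))) := by
  rw [show (Finset.univ : Finset (Fin 2 → Bool)) =
      {![false,false], ![false,true], ![true,false], ![true,true]} by decide]
  rw [Finset.prod_insert (by decide), Finset.prod_insert (by decide),
    Finset.prod_insert (by decide), Finset.prod_singleton]
  simp only [Fin.sum_univ_two, Matrix.cons_val_zero, Matrix.cons_val_one, Matrix.head_cons,
    if_true, if_false, conjPow]
  norm_num [map_mul]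
  ring_nf

lemma L1 (f : ℤ → ℂ) (M : ℕ) (x : ℤ) :
    (∑ h ∈ Fintype.piFinset (fun _ : Fin 2 => Finset.Icc (1:ℤ) (M:ℤ)),
      ∑ h' ∈ Fintype.piFinset (fun _ : Fin 2 => Finset.Icc (1:ℤ) (M:ℤ)),
      ∏ ω : Fin 2 → Bool,
        conjPow (∑ i, if ω i then 1 else 0) (f (x + ∑ i, if ω i then h i else h' i))).re
    = ∑ b ∈ Finset.Icc (1:ℤ) (M:ℤ), ∑ b' ∈ Finset.Icc (1:ℤ) (M:ℤ),
        ‖∑ a ∈ Finset.Icc (1:ℤ) (M:ℤ), f (x+a+b) * (starRingEnd ℂ) (f (x+a+b'))‖^2 := by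
  set Q := Finset.Icc (1:ℤ) (M:ℤ) with hQ
  set u : ℤ → ℤ → ℤ → ℂ := fun b b' a => f (x+a+b) * (starRingEnd ℂ) (f (x+a+b')) with hu
  have key : (∑ h ∈ Fintype.piFinset (fun _ : Fin 2 => Q),
      ∑ h' ∈ Fintype.piFinset (fun _ : Fin 2 => Q),
      ∏ ω : Fin 2 → Bool,
        conjPow (∑ i, if ω i then 1 else 0) (f (x + ∑ i, if ω i then h i else h' i)))
      = ∑ b ∈ Q, ∑ b' ∈ Q, (∑ a ∈ Q, u b b' a) * (starRingEnd ℂ) (∑ a ∈ Q, u b b' a) := by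
    have e1 : (∑ h ∈ Fintype.piFinset (fun _ : Fin 2 => Q),
        ∑ h' ∈ Fintype.piFinset (fun _ : Fin 2 => Q),
        ∏ ω : Fin 2 → Bool,
          conjPow (∑ i, if ω i then 1 else 0) (f (x + ∑ i, if ω i then h i else h' i)))
        = ∑ a ∈ Q, ∑ b ∈ Q, ∑ a' ∈ Q, ∑ b' ∈ Q, u b b' a * (starRingEnd ℂ) (u b b' a') := by
      rw [sum_piFinset_two]
      refine Finset.sum_congr rfl fun a _ => Finset.sum_congr rfl fun b _ => ?_
      rw [sum_piFinset_two]
      refine Finset.sum_congr rfl fun a' _ => Finset.sum_congr rfl fun b' _ => ?_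
      rw [prod_eval]
      simp only [hu, Matrix.cons_val_zero, Matrix.cons_val_one, Matrix.head_cons]
    rw [e1, Finset.sum_comm]
    refine Finset.sum_congr rfl fun b _ => ?_
    have e2 : ∑ a ∈ Q, ∑ a' ∈ Q, ∑ b' ∈ Q, u b b' a * (starRingEnd ℂ) (u b b' a')
        = ∑ a ∈ Q, ∑ b' ∈ Q, ∑ a' ∈ Q, u b b' a * (starRingEnd ℂ) (u b b' a') := by
      exact Finset.sum_congr rfl fun a _ => Finset.sum_comm
    rw [e2, Finset.sum_comm]
    refine Finset.sum_congr rfl fun b' _ => ?_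
    rw [map_sum, Finset.sum_mul_sum]
  rw [key]
  rw [Complex.re_sum]
  refine Finset.sum_congr rfl fun b _ => ?_
  rw [Complex.re_sum]
  refine Finset.sum_congr rfl fun b' _ => ?_
  rw [Complex.mul_conj]
  simp [Complex.normSq_eq_norm_sq, ← Complex.ofReal_pow, hu]

lemma sum_shift (c d a : ℤ) (F : ℤ → ℂ) :
    ∑ u ∈ Finset.Icc (c+a) (d+a), F u = ∑ x ∈ Finset.Icc c d, F (x + a) := by
  rw [← Finset.map_add_right_Icc, Finset.sum_map]
  rfl

-- Factorization of Ĝ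
lemma facG (f : ℤ → ℂ) (N M : ℕ) (K : ℕ) (hM : 1 ≤ M) (hMN : M ≤ N)
    (hsupp : ∀ x, x ∉ Finset.Icc (1:ℤ) (N:ℤ) → f x = 0)
    (b b' : ℤ) (hb : b ∈ Finset.Icc (1:ℤ) (M:ℤ)) (hb' : b' ∈ Finset.Icc (1:ℤ) (M:ℤ)) (j : ℤ) :
    ∑ x ∈ Finset.Icc (1-2*(M:ℤ)) (N:ℤ),
      (∑ a ∈ Finset.Icc (1:ℤ) (M:ℤ), f (x+a+b) * (starRingEnd ℂ) (f (x+a+b'))) * ec K (j * x)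
    = (∑ a ∈ Finset.Icc (1:ℤ) (M:ℤ), ec K (-(j * a))) * (ec K (-(j * b')) *
        ∑ v ∈ Finset.Icc (1:ℤ) (N:ℤ), f (v + (b - b')) * (starRingEnd ℂ) (f v) * ec K (j * v)) := by
  simp only [Finset.mem_Icc] at hb hb'
  obtain ⟨hb1, hb2⟩ := hb
  obtain ⟨hb'1, hb'2⟩ := hb'
  have hMN' : (M:ℤ) ≤ (N:ℤ) := by exact_mod_cast hMN
  have hM' : (1:ℤ) ≤ (M:ℤ) := by exact_mod_cast hM
  set W : Finset ℤ := Finset.Icc (1-(M:ℤ)) (N:ℤ) with hW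
  set g : ℤ → ℂ := fun u => f (u+b) * (starRingEnd ℂ) (f (u+b')) with hg
  have step1 : ∑ x ∈ Finset.Icc (1-2*(M:ℤ)) (N:ℤ),
      (∑ a ∈ Finset.Icc (1:ℤ) (M:ℤ), f (x+a+b) * (starRingEnd ℂ) (f (x+a+b'))) * ec K (j * x)
      = ∑ a ∈ Finset.Icc (1:ℤ) (M:ℤ), ec K (-(j * a)) * ∑ u ∈ W, g u * ec K (j * u) := by
    simp only [Finset.sum_mul]
    rw [Finset.sum_comm]
    refine Finset.sum_congr rfl fun a ha => ?_
    simp only [Finset.mem_Icc] at ha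
    have e1 : ∑ x ∈ Finset.Icc (1-2*(M:ℤ)) (N:ℤ), f (x+a+b) * (starRingEnd ℂ) (f (x+a+b')) * ec K (j * x)
        = ∑ u ∈ Finset.Icc (1-2*(M:ℤ)+a) ((N:ℤ)+a), g u * ec K (j * (u - a)) := by
      rw [sum_shift (1-2*(M:ℤ)) (N:ℤ) a (fun u => g u * ec K (j * (u - a)))]
      refine Finset.sum_congr rfl fun x _ => ?_
      simp only [hg, add_sub_cancel_right]
    rw [e1]
    have e2 : ∑ u ∈ Finset.Icc (1-2*(M:ℤ)+a) ((N:ℤ)+a), g u * ec K (j * (u - a))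
        = ∑ u ∈ W, g u * ec K (j * (u - a)) := by
      refine (Finset.sum_subset (Finset.Icc_subset_Icc (by omega) (by omega)) ?_).symm
      intro u _ hu
      simp only [hW, Finset.mem_Icc, not_and_or, not_le] at hu
      have : g u = 0 := by
        rcases hu with hu | hu
        · have : f (u+b) = 0 := hsupp _ (by simp only [Finset.mem_Icc]; omega)
          simp [hg, this]
        · have : f (u+b) = 0 := hsupp _ (by simp only [Finset.mem_Icc]; omega)
          simp [hg, this]
      simp [this]
    rw [e2, Finset.mul_sum]
    refine Finset.sum_congr rfl fun u _ => ?_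
    have : j * (u - a) = -(j*a) + j * u := by ring
    rw [this, ec_add]
    ring
  rw [step1, ← Finset.sum_mul]
  congr 1
  have e3 : ∑ u ∈ W, g u * ec K (j * u)
      = ∑ v ∈ Finset.Icc (1-(M:ℤ)+b') ((N:ℤ)+b'), g (v + -b') * ec K (j * (v + -b')) := by
    have hWeq : W = Finset.Icc ((1-(M:ℤ)+b') + -b') (((N:ℤ)+b') + -b') := by
      rw [hW]; congr 1 <;> ring
    rw [hWeq, sum_shift (1-(M:ℤ)+b') ((N:ℤ)+b') (-b') (fun u => g u * ec K (j * u))]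
  rw [e3]
  have e4 : ∑ v ∈ Finset.Icc (1-(M:ℤ)+b') ((N:ℤ)+b'), g (v + -b') * ec K (j * (v + -b'))
      = ∑ v ∈ Finset.Icc (1:ℤ) (N:ℤ), g (v + -b') * ec K (j * (v + -b')) := by
    refine (Finset.sum_subset (Finset.Icc_subset_Icc (by omega) (by omega)) ?_).symm
    intro v _ hv
    have : f v = 0 := hsupp _ hv
    have hgv : g (v + -b') = 0 := by
      simp only [hg]
      have : v + -b' + b' = v := by ring
      rw [this]
      simp [hsupp _ hv]
    simp [hgv]
  rw [e4, Finset.mul_sum]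
  refine Finset.sum_congr rfl fun v _ => ?_
  have h1 : v + -b' + b = v + (b - b') := by ring
  have h2 : v + -b' + b' = v := by ring
  have h3 : j * (v + -b') = -(j*b') + j * v := by ring
  simp only [hg, h1, h2, h3, ec_add]
  ring

lemma facH (f : ℤ → ℂ) (N : ℕ) (K : ℕ)
    (hsupp : ∀ x, x ∉ Finset.Icc (1:ℤ) (N:ℤ) → f x = 0) (j l : ℤ) :
    ∑ t ∈ Finset.Icc (1-(N:ℤ)) ((N:ℤ)-1),
      (∑ v ∈ Finset.Icc (1:ℤ) (N:ℤ), f (v+t) * (starRingEnd ℂ) (f v) * ec K (j * v)) * ec K (l * t)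
    = (∑ x ∈ Finset.Icc (1:ℤ) (N:ℤ), f x * ec K (l * x)) *
      (starRingEnd ℂ) (∑ x ∈ Finset.Icc (1:ℤ) (N:ℤ), f x * ec K ((l - j) * x)) := by
  have swap : ∑ t ∈ Finset.Icc (1-(N:ℤ)) ((N:ℤ)-1),
      (∑ v ∈ Finset.Icc (1:ℤ) (N:ℤ), f (v+t) * (starRingEnd ℂ) (f v) * ec K (j * v)) * ec K (l * t)
      = ∑ v ∈ Finset.Icc (1:ℤ) (N:ℤ), (starRingEnd ℂ) (f v) * ec K (j * v) *
          ∑ t ∈ Finset.Icc (1-(N:ℤ)) ((N:ℤ)-1), f (v+t) * ec K (l * t) := by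
    simp only [Finset.sum_mul, Finset.mul_sum]
    rw [Finset.sum_comm]
    exact Finset.sum_congr rfl fun v _ => Finset.sum_congr rfl fun t _ => by ring
  rw [swap]
  have inner : ∀ v ∈ Finset.Icc (1:ℤ) (N:ℤ),
      ∑ t ∈ Finset.Icc (1-(N:ℤ)) ((N:ℤ)-1), f (v+t) * ec K (l * t)
      = ec K (-(l * v)) * ∑ x ∈ Finset.Icc (1:ℤ) (N:ℤ), f x * ec K (l * x) := by
    intro v hv
    simp only [Finset.mem_Icc] at hv
    have hIeq : Finset.Icc (1-(N:ℤ)) ((N:ℤ)-1)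
        = Finset.Icc ((1-(N:ℤ)+v) + -v) (((N:ℤ)-1+v) + -v) := by congr 1 <;> ring
    rw [hIeq, sum_shift (1-(N:ℤ)+v) ((N:ℤ)-1+v) (-v) (fun t => f (v+t) * ec K (l * t))]
    have e2 : ∑ w ∈ Finset.Icc (1-(N:ℤ)+v) ((N:ℤ)-1+v), f (v+(w + -v)) * ec K (l * (w + -v))
        = ∑ w ∈ Finset.Icc (1:ℤ) (N:ℤ), f (v+(w + -v)) * ec K (l * (w + -v)) := by
      refine (Finset.sum_subset (Finset.Icc_subset_Icc (by omega) (by omega)) ?_).symm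
      intro w _ hw
      have h1 : v + (w + -v) = w := by ring
      rw [h1, hsupp _ hw, zero_mul]
    rw [e2, Finset.mul_sum]
    refine Finset.sum_congr rfl fun w _ => ?_
    have h1 : v + (w + -v) = w := by ring
    have h2 : l * (w + -v) = -(l*v) + l * w := by ring
    rw [h1, h2, ec_add]
    ring
  calc ∑ v ∈ Finset.Icc (1:ℤ) (N:ℤ), (starRingEnd ℂ) (f v) * ec K (j * v) *
          ∑ t ∈ Finset.Icc (1-(N:ℤ)) ((N:ℤ)-1), f (v+t) * ec K (l * t)
      = ∑ v ∈ Finset.Icc (1:ℤ) (N:ℤ),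
          (∑ x ∈ Finset.Icc (1:ℤ) (N:ℤ), f x * ec K (l * x)) *
            (starRingEnd ℂ) (f v * ec K ((l - j) * v)) := by
        refine Finset.sum_congr rfl fun v hv => ?_
        rw [inner v hv, map_mul, ec_conj]
        have h3 : ec K (j*v) * ec K (-(l*v)) = ec K (-((l-j)*v)) := by
          rw [← ec_add]; congr 1; ring
        linear_combination ((starRingEnd ℂ) (f v) * (∑ x ∈ Finset.Icc (1:ℤ) (N:ℤ), f x * ec K (l * x))) * h3
    _ = (∑ x ∈ Finset.Icc (1:ℤ) (N:ℤ), f x * ec K (l * x)) *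
        (starRingEnd ℂ) (∑ x ∈ Finset.Icc (1:ℤ) (N:ℤ), f x * ec K ((l - j) * x)) := by
        rw [← Finset.mul_sum, map_sum]


lemma parseval_neg (K : ℕ) (W : Finset ℤ) (hW : ∀ x ∈ W, ∀ y ∈ W, |x - y| < (K:ℤ)) (φ : ℤ → ℂ) :
    ∑ j ∈ Finset.range K, ‖∑ x ∈ W, φ x * ec K (-((j:ℤ) * x))‖^2 = K * ∑ x ∈ W, ‖φ x‖^2 := by
  have h := parsevalZ K W hW (fun x => (starRingEnd ℂ) (φ x))
  calc ∑ j ∈ Finset.range K, ‖∑ x ∈ W, φ x * ec K (-((j:ℤ) * x))‖^2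
      = ∑ j ∈ Finset.range K, ‖∑ x ∈ W, (starRingEnd ℂ) (φ x) * ec K ((j:ℤ) * x)‖^2 := by
        refine Finset.sum_congr rfl fun j _ => ?_
        have : ∑ x ∈ W, (starRingEnd ℂ) (φ x) * ec K ((j:ℤ) * x)
            = (starRingEnd ℂ) (∑ x ∈ W, φ x * ec K (-((j:ℤ) * x))) := by
          rw [map_sum]
          refine Finset.sum_congr rfl fun x _ => ?_
          rw [map_mul, ec_conj, neg_neg]
        rw [this, Complex.norm_conj]
    _ = K * ∑ x ∈ W, ‖(starRingEnd ℂ) (φ x)‖^2 := h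
    _ = K * ∑ x ∈ W, ‖φ x‖^2 := by
        simp [Complex.norm_conj]

lemma core (N M : ℕ) (f : ℤ → ℂ) (B : ℝ)
    (hM : 1 ≤ M) (hMN : M ≤ N)
    (hf1 : ∀ x, ‖f x‖ ≤ 1)
    (hsupp : ∀ x, x ∉ Finset.Icc (1:ℤ) (N:ℤ) → f x = 0)
    (hB : ∀ m : ℤ, ‖∑ x ∈ Finset.Icc (1:ℤ) (N:ℤ), f x * ec (4*N) (m * x)‖^2 ≤ B) :
    ∑ x ∈ Finset.Icc (1-2*(M:ℤ)) (N:ℤ), ∑ b ∈ Finset.Icc (1:ℤ) (M:ℤ), ∑ b' ∈ Finset.Icc (1:ℤ) (M:ℤ),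
      ‖∑ a ∈ Finset.Icc (1:ℤ) (M:ℤ), f (x+a+b) * (starRingEnd ℂ) (f (x+a+b'))‖^2
    ≤ (M:ℝ)^2 * B * N := by
  have hN : 1 ≤ N := le_trans hM hMN
  set K : ℕ := 4*N with hK
  have hKpos : (0:ℕ) < K := by omega
  have hKr : (0:ℝ) < (K:ℝ) := by exact_mod_cast hKpos
  set Q : Finset ℤ := Finset.Icc (1:ℤ) (M:ℤ) with hQ
  set I : Finset ℤ := Finset.Icc (1:ℤ) (N:ℤ) with hI
  set X : Finset ℤ := Finset.Icc (1-2*(M:ℤ)) (N:ℤ) with hX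
  set T : Finset ℤ := Finset.Icc (1-(N:ℤ)) ((N:ℤ)-1) with hT
  set fhat : ℤ → ℂ := fun m => ∑ x ∈ I, f x * ec K (m * x) with hfhat
  set hh : ℤ → ℤ → ℂ := fun t j => ∑ v ∈ I, f (v+t) * (starRingEnd ℂ) (f v) * ec K (j * v) with hhh
  set Kern : ℤ → ℂ := fun j => ∑ a ∈ Q, ec K (-(j * a)) with hKern
  set Gf : ℤ → ℤ → ℤ → ℂ := fun b b' x => ∑ a ∈ Q, f (x+a+b) * (starRingEnd ℂ) (f (x+a+b')) with hGf
  have hB0 : 0 ≤ B := le_trans (sq_nonneg _) (hB 0)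
  -- widths
  have wX : ∀ x ∈ X, ∀ y ∈ X, |x - y| < (K:ℤ) := by
    intro x hx y hy
    simp only [hX, Finset.mem_Icc] at hx hy
    have : (M:ℤ) ≤ (N:ℤ) := by exact_mod_cast hMN
    have : (1:ℤ) ≤ (N:ℤ) := by exact_mod_cast hN
    rw [abs_lt]; push_cast [hK]; omega
  have wT : ∀ x ∈ T, ∀ y ∈ T, |x - y| < (K:ℤ) := by
    intro x hx y hy
    simp only [hT, Finset.mem_Icc] at hx hy
    rw [abs_lt]; push_cast [hK]; omega
  have wI : ∀ x ∈ I, ∀ y ∈ I, |x - y| < (K:ℤ) := by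
    intro x hx y hy
    simp only [hI, Finset.mem_Icc] at hx hy
    rw [abs_lt]; push_cast [hK]; omega
  have wQ : ∀ x ∈ Q, ∀ y ∈ Q, |x - y| < (K:ℤ) := by
    intro x hx y hy
    simp only [hQ, Finset.mem_Icc] at hx hy
    have : (M:ℤ) ≤ (N:ℤ) := by exact_mod_cast hMN
    rw [abs_lt]; push_cast [hK]; omega
  -- C1
  have C1 : ∀ b ∈ Q, ∀ b' ∈ Q, (K:ℝ) * ∑ x ∈ X, ‖Gf b b' x‖^2
      = ∑ j ∈ Finset.range K, ‖Kern j‖^2 * ‖hh (b-b') (j:ℤ)‖^2 := by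
    intro b hb b' hb'
    rw [← parsevalZ K X wX (Gf b b')]
    refine Finset.sum_congr rfl fun j _ => ?_
    have := facG f N M K hM hMN hsupp b b' hb hb' (j:ℤ)
    rw [hGf]
    simp only
    rw [this, norm_mul, norm_mul, ec_norm, one_mul, mul_pow]
  -- C2
  have C2 : ∀ j : ℤ, ∑ b ∈ Q, ∑ b' ∈ Q, ‖Kern j‖^2 * ‖hh (b-b') j‖^2
      ≤ (M:ℝ) * (‖Kern j‖^2 * ∑ t ∈ T, ‖hh t j‖^2) := by
    intro j
    rw [Finset.sum_comm]
    have hcard : (Q.card : ℝ) = M := by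
      rw [hQ, Int.card_Icc]
      simp
    calc ∑ b' ∈ Q, ∑ b ∈ Q, ‖Kern j‖^2 * ‖hh (b-b') j‖^2
        ≤ ∑ b' ∈ Q, (‖Kern j‖^2 * ∑ t ∈ T, ‖hh t j‖^2) := by
          refine Finset.sum_le_sum fun b' hb' => ?_
          rw [← Finset.mul_sum]
          refine mul_le_mul_of_nonneg_left ?_ (sq_nonneg _)
          simp only [hQ, Finset.mem_Icc] at hb'
          have himg : ∑ b ∈ Q, ‖hh (b-b') j‖^2 = ∑ t ∈ Q.image (fun b => b - b'), ‖hh t j‖^2 := by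
            rw [Finset.sum_image]
            intro x _ y _ h
            have h' : x - b' = y - b' := h
            omega
          rw [himg]
          refine Finset.sum_le_sum_of_subset_of_nonneg ?_ (fun t _ _ => sq_nonneg _)
          intro t ht
          simp only [Finset.mem_image, hQ, Finset.mem_Icc] at ht
          obtain ⟨b, hb, rfl⟩ := ht
          simp only [hT, Finset.mem_Icc]
          have : (M:ℤ) ≤ (N:ℤ) := by exact_mod_cast hMN
          omega
      _ = (M:ℝ) * (‖Kern j‖^2 * ∑ t ∈ T, ‖hh t j‖^2) := by
          rw [Finset.sum_const, nsmul_eq_mul, hcard]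
  -- C3 + C4 + C5 : t-sum bound
  have C5 : ∑ l ∈ Finset.range K, ‖fhat (l:ℤ)‖^2 ≤ (K:ℝ) * N := by
    have := parsevalZ K I wI f
    rw [hfhat]
    simp only
    rw [this]
    have : ∑ x ∈ I, ‖f x‖^2 ≤ (N:ℝ) := by
      have hcard : (I.card : ℝ) = N := by rw [hI, Int.card_Icc]; simp
      calc ∑ x ∈ I, ‖f x‖^2 ≤ ∑ x ∈ I, 1 := by
            refine Finset.sum_le_sum fun x _ => ?_
            have := hf1 x
            nlinarith [norm_nonneg (f x)]
        _ = (I.card : ℝ) := by simp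
        _ = N := hcard
    nlinarith
  have Ct : ∀ j : ℕ, ∑ t ∈ T, ‖hh t (j:ℤ)‖^2 ≤ B * N := by
    intro j
    have C3 : (K:ℝ) * ∑ t ∈ T, ‖hh t (j:ℤ)‖^2
        = ∑ l ∈ Finset.range K, ‖fhat (l:ℤ)‖^2 * ‖fhat ((l:ℤ) - (j:ℤ))‖^2 := by
      rw [← parsevalZ K T wT (fun t => hh t (j:ℤ))]
      refine Finset.sum_congr rfl fun l _ => ?_
      have := facH f N K hsupp (j:ℤ) (l:ℤ)
      rw [hhh]
      simp only
      rw [this, norm_mul, mul_pow, hfhat]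
      congr 2
      rw [Complex.norm_conj]
    have C4 : ∑ l ∈ Finset.range K, ‖fhat (l:ℤ)‖^2 * ‖fhat ((l:ℤ) - (j:ℤ))‖^2
        ≤ B * ∑ l ∈ Finset.range K, ‖fhat (l:ℤ)‖^2 := by
      rw [Finset.mul_sum]
      refine Finset.sum_le_sum fun l _ => ?_
      rw [mul_comm B]
      refine mul_le_mul_of_nonneg_left ?_ (sq_nonneg _)
      exact hB _
    have : (K:ℝ) * ∑ t ∈ T, ‖hh t (j:ℤ)‖^2 ≤ B * ((K:ℝ) * N) := by
      rw [C3]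
      refine le_trans C4 ?_
      exact mul_le_mul_of_nonneg_left C5 hB0
    nlinarith [Finset.sum_nonneg (fun t (_ : t ∈ T) => sq_nonneg ‖hh t (j:ℤ)‖)]
  -- C6
  have C6 : ∑ j ∈ Finset.range K, ‖Kern j‖^2 = (K:ℝ) * M := by
    have := parseval_neg K Q wQ (fun _ => (1:ℂ))
    simp only [one_mul] at this
    have e : ∀ j ∈ Finset.range K, ‖Kern (j:ℤ)‖^2 = ‖∑ x ∈ Q, ec K (-((j:ℤ) * x))‖^2 := by
      intro j _; rfl
    rw [Finset.sum_congr rfl e, this]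
    have hcard : (Q.card : ℝ) = M := by rw [hQ, Int.card_Icc]; simp
    simp [hcard]
  -- assemble
  have swap1 : ∑ x ∈ X, ∑ b ∈ Q, ∑ b' ∈ Q, ‖Gf b b' x‖^2
      = ∑ b ∈ Q, ∑ b' ∈ Q, ∑ x ∈ X, ‖Gf b b' x‖^2 := by
    rw [Finset.sum_comm]
    exact Finset.sum_congr rfl fun b _ => Finset.sum_comm
  have main : (K:ℝ) * ∑ x ∈ X, ∑ b ∈ Q, ∑ b' ∈ Q, ‖Gf b b' x‖^2 ≤ (K:ℝ) * ((M:ℝ)^2 * B * N) := by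
    rw [swap1, Finset.mul_sum]
    have e1 : ∀ b ∈ Q, (K:ℝ) * ∑ b' ∈ Q, ∑ x ∈ X, ‖Gf b b' x‖^2
        = ∑ b' ∈ Q, ∑ j ∈ Finset.range K, ‖Kern (j:ℤ)‖^2 * ‖hh (b-b') (j:ℤ)‖^2 := by
      intro b hb
      rw [Finset.mul_sum]
      exact Finset.sum_congr rfl fun b' hb' => C1 b hb b' hb'
    calc ∑ b ∈ Q, (K:ℝ) * ∑ b' ∈ Q, ∑ x ∈ X, ‖Gf b b' x‖^2
        = ∑ b ∈ Q, ∑ b' ∈ Q, ∑ j ∈ Finset.range K, ‖Kern (j:ℤ)‖^2 * ‖hh (b-b') (j:ℤ)‖^2 := by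
          exact Finset.sum_congr rfl e1
      _ = ∑ j ∈ Finset.range K, ∑ b ∈ Q, ∑ b' ∈ Q, ‖Kern (j:ℤ)‖^2 * ‖hh (b-b') (j:ℤ)‖^2 := by
          have h1 : ∀ b ∈ Q, ∑ b' ∈ Q, ∑ j ∈ Finset.range K, ‖Kern (j:ℤ)‖^2 * ‖hh (b-b') (j:ℤ)‖^2
              = ∑ j ∈ Finset.range K, ∑ b' ∈ Q, ‖Kern (j:ℤ)‖^2 * ‖hh (b-b') (j:ℤ)‖^2 :=
            fun b _ => Finset.sum_comm
          rw [Finset.sum_congr rfl h1, Finset.sum_comm]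
      _ ≤ ∑ j ∈ Finset.range K, (M:ℝ) * (‖Kern (j:ℤ)‖^2 * ∑ t ∈ T, ‖hh t (j:ℤ)‖^2) := by
          exact Finset.sum_le_sum fun j _ => C2 (j:ℤ)
      _ ≤ ∑ j ∈ Finset.range K, (M:ℝ) * (‖Kern (j:ℤ)‖^2 * (B * N)) := by
          refine Finset.sum_le_sum fun j _ => ?_
          refine mul_le_mul_of_nonneg_left ?_ (by positivity)
          exact mul_le_mul_of_nonneg_left (Ct j) (sq_nonneg _)
      _ = (M:ℝ) * (B * N) * ∑ j ∈ Finset.range K, ‖Kern (j:ℤ)‖^2 := by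
          rw [Finset.mul_sum]
          exact Finset.sum_congr rfl fun j _ => by ring
      _ = (M:ℝ) * (B * N) * ((K:ℝ) * M) := by rw [C6]
      _ = (K:ℝ) * ((M:ℝ)^2 * B * N) := by ring
  have := (mul_le_mul_iff_right₀ hKr).mp main
  exact this



theorem stmt12 :
    ∃ c C : ℝ, 0 < c ∧ 0 < C ∧
      ∀ (L δ δ' : ℝ) (f : ℤ → ℂ), 0 < L → 0 < δ → δ ≤ 1 → 0 < δ' → δ' ≤ 1 →
        (∀ x, ‖f x‖ ≤ 1) → (∀ x, x ∉ Finset.Icc (1 : ℤ) ⌊L⌋ → f x = 0) →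
        δ ≤ boxNorm 2 (fun _ => Finset.Icc (1 : ℤ) ⌊δ' * L⌋) (Finset.Icc (1 : ℤ) ⌊L⌋) f →
        ∃ β : ℝ, c * (δ * δ') ^ C ≤
          ‖(∑ x ∈ Finset.Icc (1 : ℤ) ⌊L⌋,
              f x * Complex.exp (((2 * Real.pi * β * (x : ℝ) : ℝ) : ℂ) * Complex.I)) /
            ((Finset.Icc (1 : ℤ) ⌊L⌋).card : ℂ)‖ := by
  refine ⟨1/4, 2, by norm_num, by norm_num, ?_⟩
  intro L δ δ' f hL hδ hδ1 hδ' hδ'1 hf1 hsupp hbox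
  -- step 1 : M ≥ 1
  have hMz1 : (1:ℤ) ≤ ⌊δ' * L⌋ := by
    by_contra hMz
    push_neg at hMz
    have hQe : Finset.Icc (1:ℤ) ⌊δ' * L⌋ = ∅ := Finset.Icc_eq_empty (by omega)
    have hpe : Fintype.piFinset (fun _ : Fin 2 => Finset.Icc (1:ℤ) ⌊δ' * L⌋) = ∅ := by
      rw [Finset.eq_empty_iff_forall_notMem]
      intro h hh
      have := Fintype.mem_piFinset.mp hh 0
      rw [hQe] at this
      exact Finset.notMem_empty _ this
    have : boxNorm 2 (fun _ => Finset.Icc (1 : ℤ) ⌊δ' * L⌋) (Finset.Icc (1 : ℤ) ⌊L⌋) f = 0 := by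
      rw [boxNorm, boxNormPow]
      simp only [hpe, Finset.sum_empty, Complex.zero_re, tsum_zero, mul_zero]
      rw [Real.zero_rpow (by norm_num)]
    rw [this] at hbox
    linarith
  have hMzNz : ⌊δ' * L⌋ ≤ ⌊L⌋ := Int.floor_mono (by nlinarith)
  set n : ℕ := ⌊L⌋.toNat with hn'
  set m : ℕ := ⌊δ' * L⌋.toNat with hm'
  have hn : ((n:ℤ)) = ⌊L⌋ := Int.toNat_of_nonneg (by omega)
  have hm : ((m:ℤ)) = ⌊δ' * L⌋ := Int.toNat_of_nonneg (by omega)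
  have hm1 : 1 ≤ m := by omega
  have hmn : m ≤ n := by omega
  have hn1 : 1 ≤ n := le_trans hm1 hmn
  have hnr : (1:ℝ) ≤ n := by exact_mod_cast hn1
  have hmr : (1:ℝ) ≤ m := by exact_mod_cast hm1
  -- rewrite intervals
  rw [← hn] at hsupp hbox ⊢
  rw [← hm] at hbox
  set Snn : ℝ := ∑ x ∈ Finset.Icc (1-2*(m:ℤ)) (n:ℤ), ∑ b ∈ Finset.Icc (1:ℤ) (m:ℤ),
      ∑ b' ∈ Finset.Icc (1:ℤ) (m:ℤ),
      ‖∑ a ∈ Finset.Icc (1:ℤ) (m:ℤ), f (x+a+b) * (starRingEnd ℂ) (f (x+a+b'))‖^2 with hSnn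
  have hSnn0 : 0 ≤ Snn := by
    refine Finset.sum_nonneg fun x _ => Finset.sum_nonneg fun b _ => Finset.sum_nonneg fun b' _ => sq_nonneg _
  -- boxNormPow identity
  have keyP : boxNormPow 2 (fun _ => Finset.Icc (1 : ℤ) (m:ℤ)) (Finset.Icc (1 : ℤ) (n:ℤ)) f
      = ((n:ℝ))⁻¹ * (((m:ℝ)^2)⁻¹ ^ 2) * Snn := by
    rw [boxNormPow]
    have hcardn : ((Finset.Icc (1 : ℤ) (n:ℤ)).card : ℝ) = n := by rw [Int.card_Icc]; simp
    have hcardm : (∏ _i : Fin 2, ((Finset.Icc (1 : ℤ) (m:ℤ)).card : ℝ)) = (m:ℝ)^2 := by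
      rw [Finset.prod_const]
      rw [Int.card_Icc]
      simp [sq]
    rw [hcardn, hcardm]
    congr 1
    have hfun : ∀ x : ℤ, (∑ h ∈ Fintype.piFinset (fun _ : Fin 2 => Finset.Icc (1:ℤ) (m:ℤ)),
        ∑ h' ∈ Fintype.piFinset (fun _ : Fin 2 => Finset.Icc (1:ℤ) (m:ℤ)),
        ∏ ω : Fin 2 → Bool,
          conjPow (∑ i, if ω i then 1 else 0) (f (x + ∑ i, if ω i then h i else h' i))).re
        = ∑ b ∈ Finset.Icc (1:ℤ) (m:ℤ), ∑ b' ∈ Finset.Icc (1:ℤ) (m:ℤ),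
          ‖∑ a ∈ Finset.Icc (1:ℤ) (m:ℤ), f (x+a+b) * (starRingEnd ℂ) (f (x+a+b'))‖^2 :=
      fun x => L1 f m x
    rw [tsum_congr hfun]
    refine tsum_eq_sum ?_
    intro x hx
    refine Finset.sum_eq_zero fun b hb => Finset.sum_eq_zero fun b' hb' => ?_
    have : ∑ a ∈ Finset.Icc (1:ℤ) (m:ℤ), f (x+a+b) * (starRingEnd ℂ) (f (x+a+b')) = 0 := by
      refine Finset.sum_eq_zero fun a ha => ?_
      simp only [Finset.mem_Icc] at ha hb hb'
      simp only [Finset.mem_Icc] at hx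
      have : f (x+a+b) = 0 := by
        refine hsupp _ ?_
        simp only [Finset.mem_Icc]
        omega
      rw [this, zero_mul]
    rw [this]
    simp
  -- δ^4 ≤ P
  have hP0 : 0 ≤ boxNormPow 2 (fun _ => Finset.Icc (1 : ℤ) (m:ℤ)) (Finset.Icc (1 : ℤ) (n:ℤ)) f := by
    rw [keyP]
    have h0 : (0:ℝ) ≤ ((n:ℝ))⁻¹ * (((m:ℝ)^2)⁻¹ ^ 2) := by positivity
    exact mul_nonneg h0 hSnn0
  have hδ4 : δ^(4:ℕ) ≤ boxNormPow 2 (fun _ => Finset.Icc (1 : ℤ) (m:ℤ)) (Finset.Icc (1 : ℤ) (n:ℤ)) f := by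
    rw [boxNorm] at hbox
    have h1 : δ^(4:ℕ) ≤ ((boxNormPow 2 (fun _ => Finset.Icc (1 : ℤ) (m:ℤ)) (Finset.Icc (1 : ℤ) (n:ℤ)) f)
        ^ (((2:ℝ)^(2:ℕ))⁻¹))^(4:ℕ) := pow_le_pow_left₀ hδ.le hbox 4
    have h2 : (((2:ℝ)^(2:ℕ))⁻¹) = (4:ℝ)⁻¹ := by norm_num
    rw [h2, ← Real.rpow_natCast (_ ^ ((4:ℝ)⁻¹)) 4, ← Real.rpow_mul hP0] at h1
    norm_num at h1
    exact h1
  -- contradiction setup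
  by_contra hcon
  push_neg at hcon
  set B : ℝ := ((1/4) * (δ*δ')^(2:ℝ) * n)^2 with hBdef
  have hB : ∀ q : ℤ, ‖∑ x ∈ Finset.Icc (1:ℤ) (n:ℤ), f x * ec (4*n) (q * x)‖^2 ≤ B := by
    intro q
    have hβ := hcon ((q:ℝ) / (4*n))
    have hEq : ∑ x ∈ Finset.Icc (1:ℤ) (n:ℤ), f x *
        Complex.exp (((2 * Real.pi * ((q:ℝ) / (4*n)) * (x:ℝ) : ℝ) : ℂ) * Complex.I)
        = ∑ x ∈ Finset.Icc (1:ℤ) (n:ℤ), f x * ec (4*n) (q * x) := by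
      refine Finset.sum_congr rfl fun x _ => ?_
      congr 1
      rw [ec_eq]
      congr 2
      push_cast
      field_simp
    rw [hEq] at hβ
    have hcard : ((Finset.Icc (1:ℤ) (n:ℤ)).card : ℂ) = (n:ℂ) := by
      rw [Int.card_Icc]; simp
    rw [hcard] at hβ
    rw [norm_div] at hβ
    have hnn : ‖(n:ℂ)‖ = (n:ℝ) := by
      simp [Complex.norm_natCast]
    rw [hnn] at hβ
    have hnpos : (0:ℝ) < n := by linarith
    have h1 : ‖∑ x ∈ Finset.Icc (1:ℤ) (n:ℤ), f x * ec (4*n) (q * x)‖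
        ≤ (1/4) * (δ*δ')^(2:ℝ) * n := by
      have := (div_lt_iff₀ hnpos).mp hβ
      linarith
    have h0 : (0:ℝ) ≤ ‖∑ x ∈ Finset.Icc (1:ℤ) (n:ℤ), f x * ec (4*n) (q * x)‖ := norm_nonneg _
    rw [hBdef]
    nlinarith
  have hcore := core n m f B hm1 hmn hf1 hsupp hB
  rw [← hSnn] at hcore
  -- combine
  have hchain : δ^(4:ℕ) * (m:ℝ)^2 ≤ B := by
    have h1 : δ^(4:ℕ) ≤ ((n:ℝ))⁻¹ * (((m:ℝ)^2)⁻¹ ^ 2) * Snn := by rw [← keyP]; exact hδ4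
    have h2 : ((n:ℝ))⁻¹ * (((m:ℝ)^2)⁻¹ ^ 2) * Snn ≤ ((n:ℝ))⁻¹ * (((m:ℝ)^2)⁻¹ ^ 2) * ((m:ℝ)^2 * B * n) := by
      refine mul_le_mul_of_nonneg_left hcore (by positivity)
    have h3 : ((n:ℝ))⁻¹ * (((m:ℝ)^2)⁻¹ ^ 2) * ((m:ℝ)^2 * B * n) = B / (m:ℝ)^2 := by
      field_simp
    have h4 : δ^(4:ℕ) ≤ B / (m:ℝ)^2 := by
      rw [← h3]; exact le_trans h1 h2
    rw [div_eq_mul_inv] at h4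
    have hm2 : (0:ℝ) < (m:ℝ)^2 := by positivity
    calc δ^(4:ℕ) * (m:ℝ)^2 ≤ (B * ((m:ℝ)^2)⁻¹) * (m:ℝ)^2 := by
          exact mul_le_mul_of_nonneg_right h4 hm2.le
      _ = B := by field_simp
  -- m ≥ δ' n / 2
  have hfloor1 : δ' * L < (m:ℝ) + 1 := by
    have := Int.lt_floor_add_one (δ' * L)
    rw [← hm] at this
    push_cast at this
    exact this
  have hfloor2 : (n:ℝ) ≤ L := by
    have := Int.floor_le L
    rw [← hn] at this
    push_cast at this
    exact this
  have hmbound : δ' * (n:ℝ) < 2 * m := by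
    have h1 : δ' * (n:ℝ) ≤ δ' * L := by nlinarith
    nlinarith
  -- final contradiction
  have hr2 : (δ*δ')^(2:ℝ) = (δ*δ')^(2:ℕ) := by
    rw [← Real.rpow_natCast (δ*δ') 2]
    norm_num
  rw [hBdef, hr2] at hchain
  have key1 : δ^(4:ℕ) * (δ'*(n:ℝ))^2 < 4 * (δ^(4:ℕ) * (m:ℝ)^2) := by
    have h0 : 0 ≤ δ' * (n:ℝ) := by positivity
    have h1 : (δ'*(n:ℝ))^2 < (2*(m:ℝ))^2 := by nlinarith
    nlinarith [pow_pos hδ 4]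
  have key2 : 4 * (δ^(4:ℕ) * (m:ℝ)^2) ≤ 4 * ((1/4*(δ*δ')^(2:ℕ)*(n:ℝ))^2) := by linarith
  have key3 : 4 * ((1/4*(δ*δ')^(2:ℕ)*(n:ℝ))^2) = (1/4) * (δ^(4:ℕ)*δ'^4*(n:ℝ)^2) := by ring
  have hq1 : δ'^2 ≤ 1 := by nlinarith
  have hq2 : δ'^4 ≤ δ'^2 := by nlinarith [sq_nonneg δ', sq_nonneg (δ'^2)]
  have key4 : (1/4) * (δ^(4:ℕ)*δ'^4*(n:ℝ)^2) ≤ (1/4) * (δ^(4:ℕ)*δ'^2*(n:ℝ)^2) := by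
    have hp : (0:ℝ) ≤ δ^(4:ℕ) * (n:ℝ)^2 := by positivity
    nlinarith
  have key5 : δ^(4:ℕ)*(δ'*(n:ℝ))^2 = δ^(4:ℕ)*δ'^2*(n:ℝ)^2 := by ring
  have hpos : (0:ℝ) < δ^(4:ℕ)*δ'^2*(n:ℝ)^2 := by positivity
  linarith
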